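/- Let μ be a σ-finite measure, u measurable with sup_{s>0} s μ({|u|>s})^{1/2} = ‖u‖_{2,∞} < ∞, and suppose there exist ρ, α, C > 0 such that μ(B_R) ≤ C e^{2ρR} and |u| ≤ C‖u‖_{2,∞} e^{αR} μ-a.e. on B_R, for an increasing family of sets B_R (R ≥ 1) exhausting the space. Then M(u) := limsup_{R→∞} (R^{-1} ∫_{B_R} |u|² dμ)^{1/2} ≤ C' ‖u‖_{2,∞} for a constant C' depending only on ρ, α, C. -/

import Mathlib

open MeasureTheory Set Filter
open scoped ENNReal

lemma stmt18_aux {X : Type} [MeasurableSpace X] (μ : Measure X) (u : X → ℂ)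
    (hu : Measurable u) (ρ α C W R : ℝ) (hρ : 0 < ρ) (hα : 0 < α) (hC : 0 < C)
    (hW : 0 < W) (hR : 1 ≤ R) (B : Set X)
    (hvol : μ B ≤ ENNReal.ofReal (C * Real.exp (2 * ρ * R)))
    (hcheb : ∀ s : ℝ, 0 < s → μ {x | s < ‖u x‖} ≤ ENNReal.ofReal (W ^ 2 / s ^ 2))
    (hae : ∀ᵐ x ∂(μ.restrict B), ‖u x‖ ≤ C * W * Real.exp (α * R)) :
    ∫⁻ x in B, ENNReal.ofReal (‖u x‖ ^ 2) ∂μ ≤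
      ENNReal.ofReal (W ^ 2 * (C + 2 * |Real.log C| + 2 * (α + ρ) * R)) := by
  set ν := μ.restrict B with hν
  set f : X → ℝ := fun x => ‖u x‖ with hf
  have f_mble : Measurable f := continuous_norm.measurable.comp hu
  have f_nn : 0 ≤ᵐ[ν] f := Eventually.of_forall fun x => norm_nonneg _
  set s0 : ℝ := W * Real.exp (-(ρ * R)) with hs0def
  set S : ℝ := C * W * Real.exp (α * R) with hSdef
  set S' : ℝ := max s0 S with hS'def
  have hs0 : 0 < s0 := mul_pos hW (Real.exp_pos _)
  have hS : 0 < S := mul_pos (mul_pos hC hW) (Real.exp_pos _)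
  have hs0S' : s0 ≤ S' := le_max_left _ _
  set A : ℝ := C * Real.exp (2 * ρ * R) with hAdef
  have hA : 0 < A := mul_pos hC (Real.exp_pos _)
  -- layer cake
  have layer := lintegral_rpow_eq_lintegral_meas_lt_mul ν f_nn f_mble.aemeasurable
    (p := 2) two_pos
  have hrw : ∀ x, ENNReal.ofReal (‖u x‖ ^ 2) = ENNReal.ofReal (f x ^ (2:ℝ)) := by
    intro x; rw [Real.rpow_two]
  -- the two majorant pieces
  set g1 : ℝ → ℝ≥0∞ := fun t => ENNReal.ofReal A * ENNReal.ofReal t with hg1def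
  set g2 : ℝ → ℝ≥0∞ := fun t => ENNReal.ofReal (W ^ 2 / t) with hg2def
  have hg1m : Measurable g1 := measurable_const.mul measurable_id.ennreal_ofReal
  have hg2m : Measurable g2 := (measurable_const.div measurable_id).ennreal_ofReal
  have hgm : Measurable fun t => (Ioc (0:ℝ) s0).indicator g1 t + (Ioc s0 S').indicator g2 t :=
    (hg1m.indicator measurableSet_Ioc).add (hg2m.indicator measurableSet_Ioc)
  -- pointwise bound
  have hpt : ∀ t ∈ Ioi (0:ℝ), ν {a | t < f a} * ENNReal.ofReal t ≤
      (Ioc (0:ℝ) s0).indicator g1 t + (Ioc s0 S').indicator g2 t := by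
    intro t ht
    rcases le_or_gt t s0 with h1 | h1
    · have hmem : t ∈ Ioc (0:ℝ) s0 := ⟨ht, h1⟩
      rw [indicator_of_mem hmem]
      refine le_add_right (mul_le_mul_left ?_ _)
      calc ν {a | t < f a} ≤ ν univ := measure_mono (subset_univ _)
        _ = μ B := by rw [hν, Measure.restrict_apply_univ]
        _ ≤ ENNReal.ofReal A := hvol
    · rcases le_or_gt t S' with h2 | h2
      · have hmem : t ∈ Ioc s0 S' := ⟨h1, h2⟩
        rw [indicator_of_notMem (fun h => absurd h.2 (not_le.mpr h1)), indicator_of_mem hmem,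
          zero_add]
        have hch : ν {a | t < f a} ≤ ENNReal.ofReal (W ^ 2 / t ^ 2) :=
          (Measure.restrict_apply_le _ _).trans (hcheb t ht)
        have ht0 : (t:ℝ) ≠ 0 := ne_of_gt ht
        calc ν {a | t < f a} * ENNReal.ofReal t
            ≤ ENNReal.ofReal (W ^ 2 / t ^ 2) * ENNReal.ofReal t :=
              mul_le_mul_left hch _
          _ = ENNReal.ofReal (W ^ 2 / t ^ 2 * t) := (ENNReal.ofReal_mul (by positivity)).symm
          _ = ENNReal.ofReal (W ^ 2 / t) := by
              congr 1; field_simp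
      · have hnull : ν {a | t < f a} = 0 := by
          have h0 : ν {x | ¬ f x ≤ S} = 0 := ae_iff.mp hae
          refine measure_mono_null (fun a ha => ?_) h0
          exact not_le.mpr (lt_of_le_of_lt ((le_max_right s0 S).trans h2.le) ha)
        rw [hnull, zero_mul]
        exact zero_le
  -- compute the two pieces
  have hpiece1 : ∫⁻ t in Ioc (0:ℝ) s0, ENNReal.ofReal t = ENNReal.ofReal (s0 ^ 2 / 2) := by
    have hnn1 : 0 ≤ᵐ[volume.restrict (Ioc (0:ℝ) s0)] fun t : ℝ => t :=
      (ae_restrict_iff' measurableSet_Ioc).mpr (Eventually.of_forall fun t ht => le_of_lt ht.1)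
    have hint1 : IntegrableOn (fun t : ℝ => t) (Ioc (0:ℝ) s0) :=
      continuous_id'.integrableOn_Ioc
    rw [← ofReal_integral_eq_lintegral_ofReal hint1 hnn1]
    congr 1
    rw [← intervalIntegral.integral_of_le hs0.le]
    simp [integral_id]
  have hpiece2 : ∫⁻ t in Ioc s0 S', ENNReal.ofReal (W ^ 2 / t)
      = ENNReal.ofReal (W ^ 2 * Real.log (S' / s0)) := by
    have hcont : ContinuousOn (fun t : ℝ => W ^ 2 / t) (Icc s0 S') :=
      continuousOn_const.div continuousOn_id
        (fun t htt => ne_of_gt (lt_of_lt_of_le hs0 htt.1))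
    have hint : IntegrableOn (fun t : ℝ => W ^ 2 / t) (Ioc s0 S') :=
      (hcont.integrableOn_compact isCompact_Icc).mono_set Ioc_subset_Icc_self
    have hnn2 : 0 ≤ᵐ[volume.restrict (Ioc s0 S')] fun t : ℝ => W ^ 2 / t :=
      (ae_restrict_iff' measurableSet_Ioc).mpr (Eventually.of_forall fun t htt =>
        div_nonneg (sq_nonneg W) (le_of_lt (hs0.trans htt.1)))
    rw [← ofReal_integral_eq_lintegral_ofReal hint hnn2]
    congr 1
    rw [← intervalIntegral.integral_of_le hs0S']
    have h0 : (0:ℝ) ∉ uIcc s0 S' := by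
      rw [uIcc_of_le hs0S']
      exact fun h => absurd h.1 (not_le.mpr hs0)
    rw [show (fun t : ℝ => W ^ 2 / t) = fun t : ℝ => W ^ 2 * (1 / t) from
      funext fun t => by rw [mul_one_div]]
    rw [intervalIntegral.integral_const_mul, integral_one_div h0]
  -- integrate the pointwise bound
  have hIoi : ∫⁻ t in Ioi (0:ℝ), ν {a | t < f a} * ENNReal.ofReal t
      ≤ ENNReal.ofReal A * ENNReal.ofReal (s0 ^ 2 / 2)
        + ENNReal.ofReal (W ^ 2 * Real.log (S' / s0)) := by
    calc ∫⁻ t in Ioi (0:ℝ), ν {a | t < f a} * ENNReal.ofReal t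
        ≤ ∫⁻ t in Ioi (0:ℝ), ((Ioc (0:ℝ) s0).indicator g1 t + (Ioc s0 S').indicator g2 t) :=
          setLIntegral_mono hgm hpt
      _ = (∫⁻ t in Ioi (0:ℝ), (Ioc (0:ℝ) s0).indicator g1 t)
            + ∫⁻ t in Ioi (0:ℝ), (Ioc s0 S').indicator g2 t :=
          lintegral_add_left (hg1m.indicator measurableSet_Ioc) _
      _ = (∫⁻ t in Ioc (0:ℝ) s0, g1 t) + ∫⁻ t in Ioc s0 S', g2 t := by
          rw [lintegral_indicator measurableSet_Ioc, lintegral_indicator measurableSet_Ioc,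
            Measure.restrict_restrict measurableSet_Ioc,
            Measure.restrict_restrict measurableSet_Ioc,
            inter_eq_self_of_subset_left (fun x hx => hx.1),
            inter_eq_self_of_subset_left (fun x (hx : x ∈ Ioc s0 S') =>
              mem_Ioi.mpr (hs0.trans hx.1))]
      _ = ENNReal.ofReal A * ENNReal.ofReal (s0 ^ 2 / 2)
            + ENNReal.ofReal (W ^ 2 * Real.log (S' / s0)) := by
          rw [hg1def, hg2def]
          rw [lintegral_const_mul _ ENNReal.measurable_ofReal, hpiece1, hpiece2]
  -- real-number estimates
  have hAs0 : A * (s0 ^ 2 / 2) = C * W ^ 2 / 2 := by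
    have h1 : Real.exp (2 * ρ * R) * (Real.exp (-(ρ * R)) * Real.exp (-(ρ * R))) = 1 := by
      rw [← Real.exp_add, ← Real.exp_add, show 2 * ρ * R + (-(ρ * R) + -(ρ * R)) = 0 by ring,
        Real.exp_zero]
    rw [hAdef, hs0def]
    linear_combination (C * W ^ 2 / 2) * h1
  have hlognn : 0 ≤ Real.log (S' / s0) :=
    Real.log_nonneg ((one_le_div hs0).mpr hs0S')
  have hlog : Real.log (S' / s0) ≤ |Real.log C| + (α + ρ) * R := by
    have hRnn : 0 ≤ (α + ρ) * R := by nlinarith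
    rcases le_total S s0 with h | h
    · rw [hS'def, max_eq_left h, div_self (ne_of_gt hs0), Real.log_one]
      linarith [abs_nonneg (Real.log C)]
    · rw [hS'def, max_eq_right h, Real.log_div (ne_of_gt hS) (ne_of_gt hs0), hSdef, hs0def,
        Real.log_mul (by positivity) (Real.exp_ne_zero _),
        Real.log_mul (ne_of_gt hC) (ne_of_gt hW), Real.log_exp,
        Real.log_mul (ne_of_gt hW) (Real.exp_ne_zero _), Real.log_exp]
      have := le_abs_self (Real.log C)
      linarith
  -- put everything together
  calc ∫⁻ x in B, ENNReal.ofReal (‖u x‖ ^ 2) ∂μ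
      = ∫⁻ x, ENNReal.ofReal (f x ^ (2:ℝ)) ∂ν := by simp_rw [hrw]; rfl
    _ = ENNReal.ofReal 2 * ∫⁻ t in Ioi 0, ν {a | t < f a} * ENNReal.ofReal (t ^ ((2:ℝ) - 1)) :=
        layer
    _ = ENNReal.ofReal 2 * ∫⁻ t in Ioi 0, ν {a | t < f a} * ENNReal.ofReal t := by norm_num
    _ ≤ ENNReal.ofReal 2 * (ENNReal.ofReal A * ENNReal.ofReal (s0 ^ 2 / 2)
          + ENNReal.ofReal (W ^ 2 * Real.log (S' / s0))) := mul_le_mul_right hIoi _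
    _ = ENNReal.ofReal (2 * (A * (s0 ^ 2 / 2) + W ^ 2 * Real.log (S' / s0))) := by
        rw [← ENNReal.ofReal_mul hA.le, ← ENNReal.ofReal_add (by positivity)
          (mul_nonneg (sq_nonneg W) hlognn), ← ENNReal.ofReal_mul (by norm_num)]
    _ ≤ ENNReal.ofReal (W ^ 2 * (C + 2 * |Real.log C| + 2 * (α + ρ) * R)) := by
        apply ENNReal.ofReal_le_ofReal
        nlinarith [hlog, sq_nonneg W, hAs0, hlognn]

/-- If `u` has weak-L² norm at most `W`, the sets `B_R` (R ≥ 1) are increasing with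
`μ(B_R) ≤ C e^{2ρR}`, exhaust the space, and `|u| ≤ C W e^{αR}` a.e. on `B_R`, then
`M(u) = limsup_{R→∞} (R⁻¹ ∫_{B_R} |u|²)^{1/2} ≤ C' W` with `C'` depending only on
`ρ, α, C`. -/
theorem stmt18 (ρ α C : ℝ) (hρ : 0 < ρ) (hα : 0 < α) (hC : 0 < C) :
    ∃ C' : ℝ, 0 < C' ∧
      ∀ (X : Type) (mX : MeasurableSpace X) (μ : Measure X), SigmaFinite μ →
      ∀ (u : X → ℂ), Measurable u →
      ∀ (W : ℝ), 0 ≤ W →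
      (∀ s : ℝ, 0 < s → μ {x | s < ‖u x‖} ≤ ENNReal.ofReal (W ^ 2 / s ^ 2)) →
      ∀ (B : ℝ → Set X), (∀ R, MeasurableSet (B R)) →
      (∀ R₁ R₂ : ℝ, 1 ≤ R₁ → R₁ ≤ R₂ → B R₁ ⊆ B R₂) →
      (∀ x : X, ∃ R : ℝ, 1 ≤ R ∧ x ∈ B R) →
      (∀ R : ℝ, 1 ≤ R → μ (B R) ≤ ENNReal.ofReal (C * Real.exp (2 * ρ * R))) →
      (∀ R : ℝ, 1 ≤ R →
        ∀ᵐ x ∂(μ.restrict (B R)), ‖u x‖ ≤ C * W * Real.exp (α * R)) →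
      limsup
          (fun R : ℝ =>
            ((∫⁻ x in B R, ENNReal.ofReal (‖u x‖ ^ 2) ∂μ)
                / ENNReal.ofReal R) ^ ((1 : ℝ) / 2))
          atTop
        ≤ ENNReal.ofReal (C' * W) := by
  set K : ℝ := C + 2 * |Real.log C| + 2 * (α + ρ) with hKdef
  have hK : 0 < K := by
    have := abs_nonneg (Real.log C)
    nlinarith
  refine ⟨Real.sqrt K, Real.sqrt_pos.mpr hK, ?_⟩
  intro X mX μ _ u hu W hW hcheb B hBmeas hmono hexh hvol hae
  rcases hW.eq_or_lt with hW0 | hWpos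
  · -- W = 0 : u vanishes a.e.
    have hnull : μ {x | 0 < ‖u x‖} = 0 := by
      have hsub : {x | 0 < ‖u x‖} ⊆
          ⋃ n : ℕ, {x | (1:ℝ) / (n + 1) < ‖u x‖} := by
        intro x hx
        obtain ⟨n, hn⟩ := exists_nat_one_div_lt (show (0:ℝ) < ‖u x‖ from hx)
        exact mem_iUnion.mpr ⟨n, hn⟩
      refine measure_mono_null hsub (measure_iUnion_null fun n => le_antisymm ?_ (zero_le))
      have h1 : (0:ℝ) < 1 / (n + 1) := by positivity
      have := hcheb (1 / (n + 1)) h1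
      simpa [← hW0] using this
    have hzero : ∀ R : ℝ,
        (∫⁻ x in B R, ENNReal.ofReal (‖u x‖ ^ 2) ∂μ) = 0 := by
      intro R
      have hae0 : ∀ᵐ x ∂μ, ENNReal.ofReal (‖u x‖ ^ 2) = 0 := by
        rw [ae_iff]
        refine measure_mono_null (fun x hx => ?_) hnull
        simp only [mem_setOf_eq] at hx ⊢
        rcases (norm_nonneg (u x)).lt_or_eq with h | h
        · exact h
        · exact absurd (by simp [← h]) hx
      calc ∫⁻ x in B R, ENNReal.ofReal (‖u x‖ ^ 2) ∂μ
          = ∫⁻ _ in B R, 0 ∂μ := lintegral_congr_ae (ae_restrict_of_ae hae0)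
        _ = 0 := lintegral_zero
    have : (fun R : ℝ =>
        ((∫⁻ x in B R, ENNReal.ofReal (‖u x‖ ^ 2) ∂μ)
            / ENNReal.ofReal R) ^ ((1 : ℝ) / 2)) = fun _ => (0 : ℝ≥0∞) := by
      funext R
      rw [hzero R, ENNReal.zero_div, ENNReal.zero_rpow_of_pos (by norm_num)]
    rw [this, limsup_const]
    exact zero_le
  · -- W > 0
    refine Filter.limsup_le_of_le (by isBoundedDefault) ?_
    filter_upwards [eventually_ge_atTop (1:ℝ)] with R hR
    have key := stmt18_aux μ u hu ρ α C W R hρ hα hC hWpos hR (B R)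
      (hvol R hR) hcheb (hae R hR)
    have hRpos : (0:ℝ) < R := lt_of_lt_of_le one_pos hR
    have h1 : W ^ 2 * (C + 2 * |Real.log C| + 2 * (α + ρ) * R) ≤ R * (W ^ 2 * K) := by
      rw [hKdef]
      have habs : (0:ℝ) ≤ C + 2 * |Real.log C| := by
        have := abs_nonneg (Real.log C); linarith
      nlinarith [mul_nonneg (mul_nonneg (sq_nonneg W) (sub_nonneg.mpr hR)) habs]
    have h2 : (∫⁻ x in B R, ENNReal.ofReal (‖u x‖ ^ 2) ∂μ)
        ≤ ENNReal.ofReal (W ^ 2 * K) * ENNReal.ofReal R := by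
      refine key.trans ?_
      rw [← ENNReal.ofReal_mul (by positivity)]
      exact ENNReal.ofReal_le_ofReal (h1.trans_eq (mul_comm _ _))
    have h3 : (∫⁻ x in B R, ENNReal.ofReal (‖u x‖ ^ 2) ∂μ)
        / ENNReal.ofReal R ≤ ENNReal.ofReal (W ^ 2 * K) :=
      (ENNReal.div_le_iff (by simp [hRpos]) ENNReal.ofReal_ne_top).mpr h2
    calc ((∫⁻ x in B R, ENNReal.ofReal (‖u x‖ ^ 2) ∂μ)
          / ENNReal.ofReal R) ^ ((1 : ℝ) / 2)
        ≤ (ENNReal.ofReal (W ^ 2 * K)) ^ ((1 : ℝ) / 2) :=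
          ENNReal.rpow_le_rpow h3 (by norm_num)
      _ = ENNReal.ofReal ((W ^ 2 * K) ^ ((1:ℝ) / 2)) :=
          ENNReal.ofReal_rpow_of_nonneg (by positivity) (by norm_num)
      _ = ENNReal.ofReal (Real.sqrt K * W) := by
          rw [← Real.sqrt_eq_rpow, Real.sqrt_mul (sq_nonneg W) K, Real.sqrt_sq hWpos.le,
            mul_comm]
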